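/- arXiv:2410.14576 — 5 statements merged into one kernel-verified Lean document; each statement's English description precedes it below -/
import Mathlib

section
/- Let n = p·m with p, m ≥ 2 and gcd(p,m) = 1. Write m = p·s + t with s ≥ 0 and 1 ≤ t ≤ p−1. If 1 ≤ r ≤ p−1 and p divides r·t + 1, then the residue class of (p−r)·m is an idempotent element of Z_n. -/
theorem stmt_8 (p m n s t r : ℕ) (hp : 2 ≤ p) (hm : 2 ≤ m) (hcop : Nat.gcd p m = 1)
    (hn : n = p * m) (hmst : m = p * s + t) (ht1 : 1 ≤ t) (ht2 : t ≤ p - 1)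
    (hr1 : 1 ≤ r) (hr2 : r ≤ p - 1) (hdvd : p ∣ r * t + 1) :
    IsIdempotentElem ((((p - r) * m : ℕ) : ZMod n)) := by
  obtain ⟨c, hc⟩ := hdvd
  have hrp : r ≤ p := le_trans hr2 (Nat.sub_le p 1)
  set a : ℤ := (((p - r) * m : ℕ) : ℤ) with ha
  have hcast : a = ((p : ℤ) - r) * m := by
    rw [ha]; push_cast [hrp]; ring
  have hkey : (p : ℤ) ∣ a - 1 := by
    refine ⟨(p : ℤ) * s + t - r * s - c, ?_⟩
    have hcZ : (r : ℤ) * t + 1 = p * c := by exact_mod_cast hc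
    have hmZ : (m : ℤ) = p * s + t := by exact_mod_cast hmst
    rw [hcast, hmZ]
    nlinarith [hcZ]
  have hdvd2 : (n : ℤ) ∣ a * a - a := by
    have : a * a - a = (((p : ℤ) - r) * (a - 1)) * m := by rw [hcast]; ring
    rw [this, hn]
    push_cast
    exact mul_dvd_mul (Dvd.dvd.mul_left hkey _) dvd_rfl
  have h0 : ((a * a - a : ℤ) : ZMod n) = 0 :=
    (ZMod.intCast_zmod_eq_zero_iff_dvd _ _).mpr hdvd2
  have hax : ((a : ZMod n)) = (((p - r) * m : ℕ) : ZMod n) := Int.cast_natCast _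
  push_cast at h0
  rw [hax] at h0
  unfold IsIdempotentElem
  linear_combination h0
end

section
/- Let p ≥ 2, s ≥ 0, 1 ≤ t ≤ p−1 and 1 ≤ r ≤ p−1 with p dividing r·t + 1, and suppose gcd(p, p·s + t) = 1. Set m₁ = p·s + (p − t). Then the residue class of r·m₁ is an idempotent element of Z_{p·m₁}. -/
theorem stmt_11 (p s t r : ℕ) (hp : 2 ≤ p) (ht1 : 1 ≤ t) (ht2 : t ≤ p - 1)
    (hr1 : 1 ≤ r) (hr2 : r ≤ p - 1) (hdvd : p ∣ r * t + 1)
    (hcop : Nat.gcd p (p * s + t) = 1) :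
    IsIdempotentElem (((r * (p * s + (p - t)) : ℕ) : ZMod (p * (p * s + (p - t))))) := by
  obtain ⟨a, ha⟩ := hdvd
  set m := p * s + (p - t) with hm
  have hp0 : 0 < p := by omega
  have htp : t + 1 ≤ p := by omega
  have h1 : p * a ≤ p * r := by nlinarith [Nat.mul_le_mul_left r htp]
  have har : a ≤ r := Nat.le_of_mul_le_mul_left h1 hp0
  set k := r * s + r - a with hk
  have hrm : r * m = p * k + 1 := by
    have hpt : t ≤ p := by omega
    have hark : a ≤ r * s + r := by nlinarith
    zify [hpt, hark, hm, hk]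
    have ha' : (r : ℤ) * t + 1 = p * a := by exact_mod_cast ha
    linear_combination -ha'
  have key : r * m * (r * m) = r * m + p * m * (r * k) := by
    nth_rewrite 1 [hrm]
    ring
  rw [IsIdempotentElem, ← Nat.cast_mul, key, Nat.cast_add, Nat.cast_mul (p * m),
    ZMod.natCast_self, zero_mul, add_zero]
end

section
/- Let p ≥ 2, s ≥ 0, 1 ≤ t ≤ p−1 and 1 ≤ r ≤ p−1 with p dividing r·t + 1, and suppose gcd(p, p·s + t) = 1. Set m₁ = p·s + (p − t). Then the residue class of (p − r)·m₁ + 1 is an idempotent element of Z_{p·m₁}. -/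
theorem stmt_12 (p s t r : ℕ) (hp : 2 ≤ p) (ht1 : 1 ≤ t) (ht2 : t ≤ p - 1)
    (hr1 : 1 ≤ r) (hr2 : r ≤ p - 1) (hdvd : p ∣ r * t + 1)
    (hcop : Nat.gcd p (p * s + t) = 1) :
    IsIdempotentElem ((((p - r) * (p * s + (p - t)) + 1 : ℕ) :
      ZMod (p * (p * s + (p - t))))) := by
  set m : ℕ := p * s + (p - t) with hm
  set N : ℕ := (p - r) * m + 1 with hN
  have htp : t ≤ p := by omega
  have hrp : r ≤ p := by omega
  obtain ⟨c, hc⟩ := hdvd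
  have hc' : ((r : ℤ) * t + 1) = p * c := by exact_mod_cast hc
  have key : p ∣ N := by
    rw [← Int.natCast_dvd_natCast]
    have hcast : (N : ℤ) = ((p : ℤ) - r) * ((p : ℤ) * s + ((p : ℤ) - t)) + 1 := by
      simp [hN, hm, Nat.cast_sub htp, Nat.cast_sub hrp]
    rw [hcast]
    refine ⟨((p : ℤ) - r) * s + (p : ℤ) - t - r + c, ?_⟩
    linear_combination hc'
  obtain ⟨a, ha⟩ := key
  have hsub : N * N - N = (p * m) * (a * (p - r)) := by
    have h1 : N * N - N = N * (N - 1) := by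
      rw [Nat.mul_sub, Nat.mul_one]
    rw [h1]
    have h2 : N - 1 = (p - r) * m := by simp [hN]
    rw [h2, ha]
    ring
  show (N : ZMod (p * m)) * N = N
  rw [← Nat.cast_mul, ZMod.natCast_eq_natCast_iff]
  refine ((Nat.modEq_iff_dvd' ?_).mpr ⟨a * (p - r), hsub⟩).symm
  exact Nat.le_mul_of_pos_left _ (by omega)
end

section
/- Let n = p·m = p'·m' with p, m, p', m' ≥ 2 pairwise coprime factorizations (gcd(p,m) = gcd(p',m') = 1), and suppose p ≠ p', m ≠ m', p ≠ m', m ≠ p'. Let 1 ≤ r ≤ p−1 with p dividing r·m + 1 and 1 ≤ r' ≤ p'−1 with p' dividing r'·m' + 1. Then r·m + 1 ≢ r'·m' + 1 (mod n). -/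
theorem stmt_17 (n p m p' m' r r' : ℕ) (hp : 2 ≤ p) (hm : 2 ≤ m) (hp' : 2 ≤ p')
    (hm' : 2 ≤ m') (hcop : Nat.gcd p m = 1) (hcop' : Nat.gcd p' m' = 1)
    (hn : n = p * m) (hn' : n = p' * m')
    (h1 : p ≠ p') (h2 : m ≠ m') (h3 : p ≠ m') (h4 : m ≠ p')
    (hr1 : 1 ≤ r) (hr2 : r ≤ p - 1) (hdvd : p ∣ r * m + 1)
    (hr1' : 1 ≤ r') (hr2' : r' ≤ p' - 1) (hdvd' : p' ∣ r' * m' + 1) :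
    ¬ (r * m + 1 ≡ r' * m' + 1 [MOD n]) := by
  intro h
  have hx : r * m + 1 < n := by
    have h5 : r + 1 ≤ p := by omega
    have := Nat.mul_le_mul_right m h5
    rw [hn]; nlinarith
  have hx' : r' * m' + 1 < n := by
    have h5 : r' + 1 ≤ p' := by omega
    have := Nat.mul_le_mul_right m' h5
    rw [hn']; nlinarith
  have heq : r * m + 1 = r' * m' + 1 := by
    have := h
    unfold Nat.ModEq at this
    rwa [Nat.mod_eq_of_lt hx, Nat.mod_eq_of_lt hx'] at this
  have hpd' : p ∣ r' * m' + 1 := heq ▸ hdvd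
  have hp'd : p' ∣ r * m + 1 := heq ▸ hdvd'
  have hc1 : Nat.Coprime p m' := by
    have hd1 : Nat.gcd p m' ∣ r' * m' + 1 := (Nat.gcd_dvd_left p m').trans hpd'
    have hd2 : Nat.gcd p m' ∣ r' * m' := Dvd.dvd.mul_left (Nat.gcd_dvd_right p m') r'
    exact Nat.dvd_one.mp (by simpa using Nat.dvd_sub hd1 hd2)
  have hc2 : Nat.Coprime p' m := by
    have hd1 : Nat.gcd p' m ∣ r * m + 1 := (Nat.gcd_dvd_left p' m).trans hp'd
    have hd2 : Nat.gcd p' m ∣ r * m := Dvd.dvd.mul_left (Nat.gcd_dvd_right p' m) r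
    exact Nat.dvd_one.mp (by simpa using Nat.dvd_sub hd1 hd2)
  have hpp' : p ∣ p' := hc1.dvd_of_dvd_mul_right (show p ∣ p' * m' by rw [← hn', hn]; exact Dvd.intro m rfl)
  have hp'p : p' ∣ p := hc2.dvd_of_dvd_mul_right (show p' ∣ p * m by rw [← hn, hn']; exact Dvd.intro m' rfl)
  exact h1 (Nat.dvd_antisymm hpp' hp'p)
end

section
/- Let n = p·m = p'·m' with p, m, p', m' ≥ 2, gcd(p,m) = gcd(p',m') = 1, and suppose p ≠ p', m ≠ m', p ≠ m', m ≠ p'. Let 1 ≤ r ≤ p−1 with p dividing r·m + 1 and 1 ≤ r' ≤ p'−1 with p' dividing r'·m' + 1. Then r·m + 1 ≢ (p'−r')·m' (mod n). -/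
theorem stmt_18 (n p m p' m' r r' : ℕ) (hp : 2 ≤ p) (hm : 2 ≤ m) (hp' : 2 ≤ p')
    (hm' : 2 ≤ m') (hcop : Nat.gcd p m = 1) (hcop' : Nat.gcd p' m' = 1)
    (hn : n = p * m) (hn' : n = p' * m')
    (h1 : p ≠ p') (h2 : m ≠ m') (h3 : p ≠ m') (h4 : m ≠ p')
    (hr1 : 1 ≤ r) (hr2 : r ≤ p - 1) (hdvd : p ∣ r * m + 1)
    (hr1' : 1 ≤ r') (hr2' : r' ≤ p' - 1) (hdvd' : p' ∣ r' * m' + 1) :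
    ¬ (r * m + 1 ≡ (p' - r') * m' [MOD n]) := by
  intro hcong
  -- both sides are < n
  have hrp : r + 1 ≤ p := by omega
  have hlt1 : r * m + 1 < n := by
    have h := Nat.mul_le_mul_right m hrp
    rw [hn]; nlinarith
  have hs1 : 1 ≤ p' - r' := by omega
  have hs2 : p' - r' + 1 ≤ p' := by omega
  have hlt2 : (p' - r') * m' < n := by
    have h := Nat.mul_le_mul_right m' hs2
    rw [hn']; nlinarith
  have heq : r * m + 1 = (p' - r') * m' := hcong.eq_of_lt_of_lt hlt1 hlt2
  set L := r * m + 1 with hL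
  have hm'L : m' ∣ L := heq ▸ dvd_mul_left m' (p' - r')
  have hmL1 : m ∣ L - 1 := by
    have : L - 1 = r * m := by omega
    rw [this]; exact dvd_mul_left m r
  have hbound : r' * m' + 1 ≤ p' * m' := by
    have h := Nat.mul_le_mul_right m' (show r' + 1 ≤ p' by omega)
    nlinarith
  have hp'L1 : p' ∣ L - 1 := by
    have h5 : L - 1 = p' * m' - (r' * m' + 1) := by
      have : (p' - r') * m' = p' * m' - r' * m' := Nat.sub_mul p' r' m'
      omega
    rw [h5]
    exact Nat.dvd_sub (dvd_mul_right p' m') hdvd'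
  have hsub : L - (L - 1) = 1 := by omega
  have hcpp' : Nat.Coprime p p' := by
    have h := Nat.dvd_sub ((Nat.gcd_dvd_left p p').trans hdvd)
      ((Nat.gcd_dvd_right p p').trans hp'L1)
    rw [hsub] at h
    exact Nat.eq_one_of_dvd_one h
  have hcmm' : Nat.Coprime m m' := by
    have h := Nat.dvd_sub ((Nat.gcd_dvd_right m m').trans hm'L)
      ((Nat.gcd_dvd_left m m').trans hmL1)
    rw [hsub] at h
    exact Nat.eq_one_of_dvd_one h
  have hp'm : p' ∣ m := (Nat.Coprime.dvd_of_dvd_mul_left hcpp'.symm) (hn ▸ hn'.symm ▸ dvd_mul_right p' m')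
  have hmp' : m ∣ p' := (Nat.Coprime.dvd_of_dvd_mul_right hcmm') (hn' ▸ hn.symm ▸ dvd_mul_left m p)
  exact h4 (Nat.dvd_antisymm hmp' hp'm)
end
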